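/- arXiv:1403.1172 — 2 statements merged into one kernel-verified Lean document; each statement's English description precedes it below -/
import Mathlib

section
/- Let A ∈ Z^{t×(t+c-1)} be a degree matrix and s the degree of hp^A. Then the leading coefficient of hp^A equals binom(r+c-2, c-1), where r = max{i : a_{1,1} = a_{2,1} = ... = a_{i,1}} is the number of maximal equal rows of A. -/
open Polynomial

/-- The polynomial `1 + z + ⋯ + z^(d-1)`. -/
noncomputable def geom (d : ℤ) : Polynomial ℤ :=
  ∑ i ∈ Finset.range d.toNat, Polynomial.X ^ i

/-- The h-polynomial of a standard determinantal ideal with `t × m` degree matrix `A`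
(codimension `m - t + 1`), defined via the basic-double-link recursion applied at the
bottom-right entry, with the conventions `hp = 0` for `t = 0` and `hp = 1` for `m < t`. -/
noncomputable def hp : (t m : ℕ) → Matrix (Fin t) (Fin m) ℤ → Polynomial ℤ
  | 0, _, _ => 0
  | _ + 1, 0, _ => 1
  | t + 1, m + 1, A =>
    if m + 1 ≤ t then 1
    else
      Polynomial.X ^ (A (Fin.last t) (Fin.last m)).toNat *
          hp t m (fun i j => A i.castSucc j.castSucc) +
        geom (A (Fin.last t) (Fin.last m)) * hp (t + 1) m (fun i j => A i j.castSucc)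
  termination_by t m => (t, m)

/-- Delete row `k` and column `l` of a matrix. -/
def delRC {t m : ℕ} (A : Matrix (Fin (t + 1)) (Fin (m + 1)) ℤ)
    (k : Fin (t + 1)) (l : Fin (m + 1)) : Matrix (Fin t) (Fin m) ℤ :=
  fun i j => A (k.succAbove i) (l.succAbove j)

/-- Delete column `l` of a matrix. -/
def delC {t m : ℕ} (A : Matrix (Fin t) (Fin (m + 1)) ℤ) (l : Fin (m + 1)) :
    Matrix (Fin t) (Fin m) ℤ :=
  fun i j => A i (l.succAbove j)

/-- `A` is a degree matrix: homogeneous (`a_{i,j} = b_j - a_i`), entries weakly increasing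
left-to-right and bottom-to-top, and positive on the main diagonal. -/
def IsDegreeMatrix {a b : ℕ} (A : Matrix (Fin a) (Fin b) ℤ) : Prop :=
  (∃ (α : Fin a → ℤ) (β : Fin b → ℤ), ∀ i j, A i j = β j - α i) ∧
    (∀ (i : Fin a) (j j' : Fin b), j ≤ j' → A i j ≤ A i j') ∧
    (∀ (i i' : Fin a) (j : Fin b), i ≤ i' → A i' j ≤ A i j) ∧
    (∀ (i : Fin a) (h : (i : ℕ) < b), 0 < A i ⟨i, h⟩)

/-- Binomial coefficient with integer top argument, with the convention that it vanishes
whenever the top argument is negative or smaller than the bottom one. -/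
def ch (a : ℤ) (b : ℕ) : ℤ := if a < 0 then 0 else (a.toNat).choose b

/-- `h : ℕ → ℤ` is a pure O-sequence: it is the f-vector (counting monomials by degree)
of a nonempty finite order ideal of monomials all of whose maximal elements have the
same degree. -/
def IsPureOSequence (h : ℕ → ℤ) : Prop :=
  ∃ (N : ℕ) (Γ : Finset (Fin N → ℕ)),
    Γ.Nonempty ∧
      (∀ μ ∈ Γ, ∀ ν : Fin N → ℕ, ν ≤ μ → ν ∈ Γ) ∧
      (∃ d : ℕ, ∀ μ ∈ Γ, (∀ ν ∈ Γ, μ ≤ ν → μ = ν) → ∑ j, μ j = d) ∧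
      (∀ i : ℕ, ((Γ.filter fun μ => ∑ j, μ j = i).card : ℤ) = h i)



section Aux


lemma geom_monic {d : ℤ} (hd : 1 ≤ d) : (geom d).Monic :=
  Polynomial.monic_geom_sum_X (by omega)

lemma geom_natDegree {d : ℤ} (hd : 1 ≤ d) : (geom d).natDegree = d.toNat - 1 := by
  have hn : d.toNat ≠ 0 := by omega
  apply le_antisymm
  · rw [geom]
    apply Polynomial.natDegree_sum_le_of_forall_le
    intro i hi
    rw [Polynomial.natDegree_X_pow]
    exact Nat.le_sub_one_of_lt (Finset.mem_range.mp hi)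
  · apply Polynomial.le_natDegree_of_ne_zero
    rw [geom, Polynomial.finset_sum_coeff]
    simp only [Polynomial.coeff_X_pow]
    rw [Finset.sum_ite_eq (Finset.range d.toNat) (d.toNat - 1) (fun _ => (1:ℤ))]
    simp only [Finset.mem_range]
    rw [if_pos (by omega)]
    exact one_ne_zero

lemma add_facts_lt {p q : Polynomial ℤ} (hp0 : p ≠ 0) (hlt : q.natDegree < p.natDegree) :
    p + q ≠ 0 ∧ (p+q).natDegree = p.natDegree ∧ (p+q).leadingCoeff = p.leadingCoeff := by
  have hdeg : q.degree < p.degree := by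
    rcases eq_or_ne q 0 with rfl | hq0
    · rw [Polynomial.degree_zero]
      exact bot_lt_iff_ne_bot.mpr (Polynomial.degree_ne_bot.mpr hp0)
    · exact Polynomial.degree_lt_degree hlt
  have hd : (p + q).degree = p.degree := Polynomial.degree_add_eq_left_of_degree_lt hdeg
  refine ⟨?_, Polynomial.natDegree_eq_of_degree_eq hd, Polynomial.leadingCoeff_add_of_degree_lt' hdeg⟩
  intro h
  rw [h, Polynomial.degree_zero] at hd
  exact (Polynomial.degree_ne_bot.mpr hp0) hd.symm

lemma add_facts_eq {p q : Polynomial ℤ} (hp0 : p ≠ 0) (hq0 : q ≠ 0)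
    (hd : p.natDegree = q.natDegree) (h1 : 0 < p.leadingCoeff) (h2 : 0 < q.leadingCoeff) :
    p + q ≠ 0 ∧ (p+q).natDegree = p.natDegree ∧
      (p+q).leadingCoeff = p.leadingCoeff + q.leadingCoeff := by
  have hdeg : p.degree = q.degree := by
    rw [Polynomial.degree_eq_natDegree hp0, Polynomial.degree_eq_natDegree hq0, hd]
  have hlc : p.leadingCoeff + q.leadingCoeff ≠ 0 := by positivity
  have hlc2 := Polynomial.leadingCoeff_add_of_degree_eq hdeg hlc
  have hne : p + q ≠ 0 := by
    intro h
    rw [h, Polynomial.leadingCoeff_zero] at hlc2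
    exact hlc hlc2.symm
  have hdd : (p + q).degree = p.degree := by
    rw [Polynomial.degree_add_eq_of_leadingCoeff_add_ne_zero hlc, hdeg, max_self]
  exact ⟨hne, Polynomial.natDegree_eq_of_degree_eq hdd, hlc2⟩


lemma entry_pos {t m : ℕ} {A : Matrix (Fin (t+1)) (Fin m) ℤ} (hA : IsDegreeMatrix A)
    (i : Fin (t+1)) (j : Fin m) (hij : (i:ℕ) ≤ (j:ℕ)) : 0 < A i j := by
  have hjm : (i:ℕ) < m := lt_of_le_of_lt hij j.isLt
  have h1 := hA.2.2.2 i hjm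
  have h2 := hA.2.1 i ⟨(i:ℕ), hjm⟩ j (by rw [Fin.le_def]; exact hij)
  exact lt_of_lt_of_le h1 h2

lemma isDM_del1 {t m : ℕ} {A : Matrix (Fin (t+1)) (Fin (m+1)) ℤ} (hA : IsDegreeMatrix A) :
    IsDegreeMatrix (fun i j => A i.castSucc j.castSucc : Matrix (Fin t) (Fin m) ℤ) := by
  obtain ⟨⟨α, β, hαβ⟩, hcol, hrow, hdiag⟩ := hA
  refine ⟨⟨fun i => α i.castSucc, fun j => β j.castSucc, fun i j => hαβ _ _⟩, ?_, ?_, ?_⟩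
  · intro i j j' h
    exact hcol _ _ _ (by rwa [Fin.le_def, Fin.coe_castSucc, Fin.coe_castSucc, ← Fin.le_def])
  · intro i i' j h
    exact hrow _ _ _ (by rwa [Fin.le_def, Fin.coe_castSucc, Fin.coe_castSucc, ← Fin.le_def])
  · intro i h
    exact hdiag i.castSucc (by simpa using Nat.lt_succ_of_lt h)

lemma isDM_del2 {t m : ℕ} {A : Matrix (Fin t) (Fin (m+1)) ℤ} (hA : IsDegreeMatrix A) :
    IsDegreeMatrix (fun i j => A i j.castSucc : Matrix (Fin t) (Fin m) ℤ) := by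
  obtain ⟨⟨α, β, hαβ⟩, hcol, hrow, hdiag⟩ := hA
  refine ⟨⟨α, fun j => β j.castSucc, fun i j => hαβ _ _⟩, ?_, ?_, ?_⟩
  · intro i j j' h
    exact hcol _ _ _ (by rwa [Fin.le_def, Fin.coe_castSucc, Fin.coe_castSucc, ← Fin.le_def])
  · intro i i' j h
    exact hrow _ _ _ h
  · intro i h
    exact hdiag i (by omega)

def SN (t m : ℕ) (A : Matrix (Fin (t+1)) (Fin m) ℤ) : ℕ :=
  t + ∑ j : Fin m, (A (if h : (j:ℕ) < t+1 then ⟨(j:ℕ), h⟩ else 0) j - 1).toNat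

lemma SN_term_one {t m : ℕ} {A : Matrix (Fin (t+1)) (Fin m) ℤ} (hA : IsDegreeMatrix A)
    (j : Fin m) : 1 ≤ A (if h : (j:ℕ) < t+1 then ⟨(j:ℕ), h⟩ else 0) j := by
  split
  · exact entry_pos hA _ _ (le_refl _)
  · exact entry_pos hA _ _ (by simp)

lemma SN_cast {t m : ℕ} {A : Matrix (Fin (t+1)) (Fin m) ℤ} (hA : IsDegreeMatrix A) :
    (SN t m A : ℤ) = t + ∑ j : Fin m, (A (if h : (j:ℕ) < t+1 then ⟨(j:ℕ), h⟩ else 0) j - 1) := by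
  rw [SN, Nat.cast_add, Nat.cast_sum]
  congr 1
  refine Finset.sum_congr rfl fun j _ => ?_
  rw [Int.toNat_of_nonneg (by linarith [SN_term_one hA j])]


lemma SN_delC {t m : ℕ} (A : Matrix (Fin (t+1)) (Fin (m+1)) ℤ) (htm : t + 1 ≤ m) :
    SN t (m+1) A = SN t m (fun i j => A i j.castSucc) + (A 0 (Fin.last m) - 1).toNat := by
  unfold SN
  rw [Fin.sum_univ_castSucc]
  rw [dif_neg (by simp only [Fin.val_last]; omega)]
  simp only [Fin.coe_castSucc]
  omega

lemma SN_corner {t : ℕ} (A : Matrix (Fin (t+2)) (Fin (t+2)) ℤ) (hA : IsDegreeMatrix A) :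
    SN (t+1) (t+2) A =
      (A (Fin.last (t+1)) (Fin.last (t+1))).toNat +
        SN t (t+1) (fun i j => A i.castSucc j.castSucc) := by
  have hA1 : IsDegreeMatrix (fun i j => A i.castSucc j.castSucc :
      Matrix (Fin (t+1)) (Fin (t+1)) ℤ) := isDM_del1 hA
  have ha : 1 ≤ A (Fin.last (t+1)) (Fin.last (t+1)) := entry_pos hA _ _ (le_refl _)
  have key : (SN (t+1) (t+2) A : ℤ) =
      ((A (Fin.last (t+1)) (Fin.last (t+1))).toNat : ℤ) +
        (SN t (t+1) (fun i j => A i.castSucc j.castSucc) : ℤ) := by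
    rw [SN_cast hA, SN_cast hA1, Fin.sum_univ_castSucc,
      Int.toNat_of_nonneg (by linarith)]
    have hlast : (A (if h : ((Fin.last (t+1) : Fin (t+2)) : ℕ) < t+1+1 then
        ⟨((Fin.last (t+1) : Fin (t+2)) : ℕ), h⟩ else 0) (Fin.last (t+1)) - 1)
        = A (Fin.last (t+1)) (Fin.last (t+1)) - 1 := by
      rw [dif_pos (by simp only [Fin.val_last]; omega)]
    rw [hlast]
    have hsum : (∑ j : Fin (t+1),
        (A (if h : ((j.castSucc : Fin (t+2)) : ℕ) < t+1+1 then
          ⟨((j.castSucc : Fin (t+2)) : ℕ), h⟩ else 0) j.castSucc - 1))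
        = ∑ j : Fin (t+1),
          ((fun i j => A i.castSucc j.castSucc : Matrix (Fin (t+1)) (Fin (t+1)) ℤ)
            (if h : (j:ℕ) < t+1 then ⟨(j:ℕ), h⟩ else 0) j - 1) := by
      refine Finset.sum_congr rfl fun j _ => ?_
      rw [dif_pos (by simp only [Fin.coe_castSucc]; omega), dif_pos j.isLt]
    rw [hsum]
    push_cast
    ring
  exact_mod_cast key

lemma SN_delRC {t m : ℕ} (A : Matrix (Fin (t+2)) (Fin (m+1)) ℤ) (hA : IsDegreeMatrix A)
    (htm : t + 2 ≤ m) :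
    SN (t+1) (m+1) A =
      (A (Fin.last (t+1)) (Fin.last m)).toNat +
        SN t m (fun i j => A i.castSucc j.castSucc) := by
  have hA1 : IsDegreeMatrix (fun i j => A i.castSucc j.castSucc :
      Matrix (Fin (t+1)) (Fin m) ℤ) := isDM_del1 hA
  have ha : 1 ≤ A (Fin.last (t+1)) (Fin.last m) :=
    entry_pos hA _ _ (by simp only [Fin.val_last]; omega)
  have hm : t + 1 < m := by omega
  obtain ⟨α, β, hh⟩ := hA.1
  have key : (SN (t+1) (m+1) A : ℤ) =
      ((A (Fin.last (t+1)) (Fin.last m)).toNat : ℤ) +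
        (SN t m (fun i j => A i.castSucc j.castSucc) : ℤ) := by
    rw [SN_cast hA, SN_cast hA1, Fin.sum_univ_castSucc,
      Int.toNat_of_nonneg (by linarith)]
    have hlast : (A (if h : ((Fin.last m : Fin (m+1)) : ℕ) < t+1+1 then
        ⟨((Fin.last m : Fin (m+1)) : ℕ), h⟩ else 0) (Fin.last m) - 1)
        = A 0 (Fin.last m) - 1 := by
      rw [dif_neg (by simp only [Fin.val_last]; omega)]
    rw [hlast]
    have hsum : (∑ j : Fin m,
        (A (if h : ((j.castSucc : Fin (m+1)) : ℕ) < t+1+1 then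
          ⟨((j.castSucc : Fin (m+1)) : ℕ), h⟩ else 0) j.castSucc - 1))
        = (∑ j : Fin m,
          ((fun i j => A i.castSucc j.castSucc : Matrix (Fin (t+1)) (Fin m) ℤ)
            (if h : (j:ℕ) < t+1 then ⟨(j:ℕ), h⟩ else 0) j - 1))
          + (A (Fin.last (t+1)) ((⟨t+1, hm⟩ : Fin m)).castSucc
              - A 0 ((⟨t+1, hm⟩ : Fin m)).castSucc) := by
      have hkey : ∀ j : Fin m,
          (A (if h : ((j.castSucc : Fin (m+1)) : ℕ) < t+1+1 then
            ⟨((j.castSucc : Fin (m+1)) : ℕ), h⟩ else 0) j.castSucc - 1)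
          = ((fun i j => A i.castSucc j.castSucc : Matrix (Fin (t+1)) (Fin m) ℤ)
              (if h : (j:ℕ) < t+1 then ⟨(j:ℕ), h⟩ else 0) j - 1)
            + (if j = (⟨t+1, hm⟩ : Fin m) then
                A (Fin.last (t+1)) j.castSucc - A 0 j.castSucc else 0) := by
        intro j
        beta_reduce
        rcases lt_trichotomy (j : ℕ) (t+1) with hj | hj | hj
        · have hcond : ((j.castSucc : Fin (m+1)) : ℕ) < t+1+1 := by
            simp only [Fin.coe_castSucc]; omega
          rw [if_neg (Fin.ne_of_val_ne (show (j:ℕ) ≠ t+1 by omega)), add_zero,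
            dif_pos hcond, dif_pos (show (j:ℕ) < t+1 from hj)]
          have hL : (⟨((j.castSucc : Fin (m+1)) : ℕ), hcond⟩ : Fin (t+2))
              = (⟨(j:ℕ), hj⟩ : Fin (t+1)).castSucc := Fin.ext (by simp)
          rw [hL]
        · have hcond : ((j.castSucc : Fin (m+1)) : ℕ) < t+1+1 := by
            simp only [Fin.coe_castSucc]; omega
          rw [if_pos (Fin.ext (show (j:ℕ) = t+1 from hj)),
            dif_pos hcond, dif_neg (show ¬ (j:ℕ) < t+1 by omega)]
          have hL : (⟨((j.castSucc : Fin (m+1)) : ℕ), hcond⟩ : Fin (t+2))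
              = Fin.last (t+1) := Fin.ext (by simpa using hj)
          rw [hL, Fin.castSucc_zero]
          ring
        · rw [if_neg (Fin.ne_of_val_ne (show (j:ℕ) ≠ t+1 by omega)), add_zero,
            dif_neg (show ¬ ((j.castSucc : Fin (m+1)) : ℕ) < t+1+1 by
              simp only [Fin.coe_castSucc]; omega),
            dif_neg (show ¬ (j:ℕ) < t+1 by omega), Fin.castSucc_zero]
      rw [Finset.sum_congr rfl (fun j _ => hkey j), Finset.sum_add_distrib,
        Finset.sum_ite_eq' Finset.univ (⟨t+1, hm⟩ : Fin m)
          (fun j => A (Fin.last (t+1)) j.castSucc - A 0 j.castSucc),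
        if_pos (Finset.mem_univ _)]
    rw [hsum]
    have hom : A (Fin.last (t+1)) (Fin.last m) - A 0 (Fin.last m)
        = A (Fin.last (t+1)) ((⟨t+1, hm⟩ : Fin m)).castSucc
          - A 0 ((⟨t+1, hm⟩ : Fin m)).castSucc := by
      rw [hh, hh, hh, hh]; ring
    push_cast
    linarith [hom]
  exact_mod_cast key


lemma hp_zero (m : ℕ) (A : Matrix (Fin 0) (Fin m) ℤ) : hp 0 m A = 0 := by rw [hp]

lemma hp_eq_one (t : ℕ) (A : Matrix (Fin (t+1)) (Fin t) ℤ) : hp (t+1) t A = 1 := by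
  cases t with
  | zero => rw [hp]
  | succ t => rw [hp, if_pos (by omega)]

lemma hp_rec (t m : ℕ) (h : t ≤ m) (A : Matrix (Fin (t+1)) (Fin (m+1)) ℤ) :
    hp (t+1) (m+1) A = Polynomial.X ^ (A (Fin.last t) (Fin.last m)).toNat *
          hp t m (fun i j => A i.castSucc j.castSucc) +
        geom (A (Fin.last t) (Fin.last m)) * hp (t + 1) m (fun i j => A i j.castSucc) := by
  rw [hp, if_neg (by omega)]

lemma subr {t m r : ℕ} (A : Matrix (Fin (t+2)) (Fin (m+2)) ℤ) (hA : IsDegreeMatrix A)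
    (hr1 : 1 ≤ r) (hrt : r ≤ t+2)
    (hreq : ∀ i : Fin (t+2), (i:ℕ) < r → A i 0 = A 0 0)
    (hrmax : ∀ h : r < t+2, A ⟨r,h⟩ 0 ≠ A 0 0) :
    (∀ i : Fin (t+1), (i:ℕ) < min r (t+1) →
       ((fun i j => A i.castSucc j.castSucc) : Matrix (Fin (t+1)) (Fin (m+1)) ℤ) i 0
         = ((fun i j => A i.castSucc j.castSucc) : Matrix (Fin (t+1)) (Fin (m+1)) ℤ) 0 0) ∧
    (∀ h : min r (t+1) < t+1,
       ((fun i j => A i.castSucc j.castSucc) : Matrix (Fin (t+1)) (Fin (m+1)) ℤ)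
           ⟨min r (t+1), h⟩ 0
         ≠ ((fun i j => A i.castSucc j.castSucc) : Matrix (Fin (t+1)) (Fin (m+1)) ℤ) 0 0) := by
  constructor
  · intro i hi
    show A i.castSucc (Fin.castSucc 0) = A (Fin.castSucc 0) (Fin.castSucc 0)
    rw [Fin.castSucc_zero]
    exact hreq i.castSucc (by simpa using by omega : ((i.castSucc : Fin (t+2)) : ℕ) < r)
  · intro h
    have hrlt : r < t + 1 := by omega
    have hmin : min r (t+1) = r := by omega
    show A (Fin.castSucc ⟨min r (t+1), h⟩) (Fin.castSucc 0)
        ≠ A (Fin.castSucc 0) (Fin.castSucc 0)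
    rw [Fin.castSucc_zero]
    have hc : (Fin.castSucc (⟨min r (t+1), h⟩ : Fin (t+1)) : Fin (t+2))
        = ⟨r, by omega⟩ := Fin.ext (by simp [hmin])
    rw [hc]
    exact hrmax (by omega)


lemma master (M : ℕ) : ∀ (t r : ℕ) (A : Matrix (Fin (t+1)) (Fin (M+1)) ℤ),
    t ≤ M → IsDegreeMatrix A → 1 ≤ r → r ≤ t + 1 →
    (∀ i : Fin (t+1), (i:ℕ) < r → A i 0 = A 0 0) →
    (∀ h : r < t+1, A ⟨r, h⟩ 0 ≠ A 0 0) →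
    hp (t+1) (M+1) A ≠ 0 ∧ (hp (t+1) (M+1) A).natDegree = SN t (M+1) A ∧
      (hp (t+1) (M+1) A).leadingCoeff = ((r - 1 + (M - t)).choose (M - t) : ℤ) := by
  induction M using Nat.strong_induction_on with
  | _ M IH =>
  intro t r A htM hA hr1 hrt hreq hrmax
  have ha1 : (1:ℤ) ≤ A (Fin.last t) (Fin.last M) :=
    entry_pos hA _ _ (by simp only [Fin.val_last]; omega)
  rw [hp_rec t M htM A]
  rcases eq_or_lt_of_le htM with rfl | hlt
  · -- codimension-1 case: M = t
    rw [show hp (t+1) t (fun i j => A i j.castSucc) = 1 from hp_eq_one _ _, mul_one]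
    cases t with
    | zero =>
      rw [show hp 0 0 (fun i j => A i.castSucc j.castSucc) = 0 from hp_zero _ _, mul_zero, zero_add]
      rw [show (Fin.last 0 : Fin 1) = 0 from Fin.ext (by simp)] at ha1 ⊢
      have hSN : SN 0 1 A = (A 0 0 - 1).toNat := by
        simp [SN]
      refine ⟨(geom_monic ha1).ne_zero, ?_, ?_⟩
      · rw [geom_natDegree ha1, hSN]
        omega
      · rw [(geom_monic ha1).leadingCoeff]
        simp
    | succ t'' =>
      obtain ⟨hreq1, hrmax1⟩ := subr A hA hr1 hrt hreq hrmax
      obtain ⟨h1ne, h1deg, h1lc⟩ := IH t'' (by omega) t'' (min r (t''+1))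
        (fun i j => A i.castSucc j.castSucc) (le_refl _) (isDM_del1 hA)
        (by omega) (by omega) hreq1 hrmax1
      have hSNc := SN_corner A hA
      have hp1ne : X ^ (A (Fin.last (t''+1)) (Fin.last (t''+1))).toNat *
          hp (t''+1) (t''+1) (fun i j => A i.castSucc j.castSucc) ≠ 0 :=
        mul_ne_zero (pow_ne_zero _ X_ne_zero) h1ne
      have hp1deg : (X ^ (A (Fin.last (t''+1)) (Fin.last (t''+1))).toNat *
          hp (t''+1) (t''+1) (fun i j => A i.castSucc j.castSucc)).natDegree
            = SN (t''+1) (t''+2) A := by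
        rw [natDegree_mul (pow_ne_zero _ X_ne_zero) h1ne, natDegree_X_pow, h1deg, hSNc]
      have hp1lc : (X ^ (A (Fin.last (t''+1)) (Fin.last (t''+1))).toNat *
          hp (t''+1) (t''+1) (fun i j => A i.castSucc j.castSucc)).leadingCoeff = 1 := by
        rw [leadingCoeff_mul, leadingCoeff_X_pow, one_mul, h1lc]
        simp
      have hgdeg : (geom (A (Fin.last (t''+1)) (Fin.last (t''+1)))).natDegree
          < (X ^ (A (Fin.last (t''+1)) (Fin.last (t''+1))).toNat *
            hp (t''+1) (t''+1) (fun i j => A i.castSucc j.castSucc)).natDegree := by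
        rw [geom_natDegree ha1, hp1deg, hSNc]
        omega
      obtain ⟨hne, hdeg, hlc⟩ := add_facts_lt hp1ne hgdeg
      refine ⟨hne, by rw [hdeg, hp1deg], ?_⟩
      rw [hlc, hp1lc]
      simp
  · -- codimension ≥ 2 case: t < M
    obtain ⟨M'', rfl⟩ : ∃ k, M = k + 1 := ⟨M - 1, by omega⟩
    have hreq2 : ∀ i : Fin (t+1), (i:ℕ) < r →
        ((fun i j => A i j.castSucc) : Matrix (Fin (t+1)) (Fin (M''+1)) ℤ) i 0
          = ((fun i j => A i j.castSucc) : Matrix (Fin (t+1)) (Fin (M''+1)) ℤ) 0 0 := by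
      intro i hi
      show A i (Fin.castSucc 0) = A 0 (Fin.castSucc 0)
      rw [Fin.castSucc_zero]
      exact hreq i hi
    have hrmax2 : ∀ h : r < t+1,
        ((fun i j => A i j.castSucc) : Matrix (Fin (t+1)) (Fin (M''+1)) ℤ) ⟨r, h⟩ 0
          ≠ ((fun i j => A i j.castSucc) : Matrix (Fin (t+1)) (Fin (M''+1)) ℤ) 0 0 := by
      intro h
      show A ⟨r,h⟩ (Fin.castSucc 0) ≠ A 0 (Fin.castSucc 0)
      rw [Fin.castSucc_zero]
      exact hrmax h
    obtain ⟨h2ne, h2deg, h2lc⟩ := IH M'' (by omega) t r (fun i j => A i j.castSucc)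
      (by omega) (isDM_del2 hA) hr1 hrt hreq2 hrmax2
    have hb1 : (1:ℤ) ≤ A 0 (Fin.last (M''+1)) := entry_pos hA _ _ (by simp)
    have hab : A (Fin.last t) (Fin.last (M''+1)) ≤ A 0 (Fin.last (M''+1)) :=
      hA.2.2.1 0 (Fin.last t) _ (by simp [Fin.le_def])
    have hSN : SN t (M''+2) A = SN t (M''+1) (fun i j => A i j.castSucc)
        + (A 0 (Fin.last (M''+1)) - 1).toNat := SN_delC A (by omega)
    have hp2ne : geom (A (Fin.last t) (Fin.last (M''+1))) *
        hp (t+1) (M''+1) (fun i j => A i j.castSucc) ≠ 0 :=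
      mul_ne_zero (geom_monic ha1).ne_zero h2ne
    have hp2deg : (geom (A (Fin.last t) (Fin.last (M''+1))) *
        hp (t+1) (M''+1) (fun i j => A i j.castSucc)).natDegree
          = (A (Fin.last t) (Fin.last (M''+1))).toNat - 1
            + SN t (M''+1) (fun i j => A i j.castSucc) := by
      rw [natDegree_mul (geom_monic ha1).ne_zero h2ne, geom_natDegree ha1, h2deg]
    have hp2lc : (geom (A (Fin.last t) (Fin.last (M''+1))) *
        hp (t+1) (M''+1) (fun i j => A i j.castSucc)).leadingCoeff
          = ((r - 1 + (M'' - t)).choose (M'' - t) : ℤ) := by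
      rw [leadingCoeff_mul, (geom_monic ha1).leadingCoeff, one_mul, h2lc]
    obtain ⟨α, β, hh⟩ := hA.1
    have hdiff : A (Fin.last t) (Fin.last (M''+1)) - A 0 (Fin.last (M''+1))
        = A (Fin.last t) 0 - A 0 0 := by
      rw [hh, hh, hh, hh]; ring
    cases t with
    | zero =>
      rw [show hp 0 (M''+1) (fun i j => A i.castSucc j.castSucc) = 0 from hp_zero _ _, mul_zero, zero_add]
      have hr : r = 1 := by omega
      subst hr
      have haeqb : A (Fin.last 0) (Fin.last (M''+1)) = A 0 (Fin.last (M''+1)) := by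
        rw [show (Fin.last 0 : Fin 1) = 0 from Fin.ext (by simp)]
      refine ⟨hp2ne, ?_, ?_⟩
      · rw [hp2deg, hSN]
        omega
      · rw [hp2lc]
        norm_num [Nat.choose_self]
    | succ t'' =>
      obtain ⟨hreq1, hrmax1⟩ := subr A hA hr1 hrt hreq hrmax
      obtain ⟨h1ne, h1deg, h1lc⟩ := IH M'' (by omega) t'' (min r (t''+1))
        (fun i j => A i.castSucc j.castSucc) (by omega) (isDM_del1 hA)
        (by omega) (by omega) hreq1 hrmax1
      have hSNc := SN_delRC A hA (by omega)
      have hp1ne : X ^ (A (Fin.last (t''+1)) (Fin.last (M''+1))).toNat *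
          hp (t''+1) (M''+1) (fun i j => A i.castSucc j.castSucc) ≠ 0 :=
        mul_ne_zero (pow_ne_zero _ X_ne_zero) h1ne
      have hp1deg : (X ^ (A (Fin.last (t''+1)) (Fin.last (M''+1))).toNat *
          hp (t''+1) (M''+1) (fun i j => A i.castSucc j.castSucc)).natDegree
            = SN (t''+1) (M''+2) A := by
        rw [natDegree_mul (pow_ne_zero _ X_ne_zero) h1ne, natDegree_X_pow, h1deg, hSNc]
      have hp1lc : (X ^ (A (Fin.last (t''+1)) (Fin.last (M''+1))).toNat *
          hp (t''+1) (M''+1) (fun i j => A i.castSucc j.castSucc)).leadingCoeff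
            = ((min r (t''+1) - 1 + (M'' - t'')).choose (M'' - t'') : ℤ) := by
        rw [leadingCoeff_mul, leadingCoeff_X_pow, one_mul, h1lc]
      rcases Nat.lt_or_ge r (t''+2) with hrs | hrs
      · -- r ≤ t+1 : bottom row differs from the top one
        have hmin : min r (t''+1) = r := by omega
        have hstrict : A (Fin.last (t''+1)) 0 < A 0 0 := by
          have h1 : A ⟨r, by omega⟩ 0 ≠ A 0 0 := hrmax (by omega)
          have h2 : A ⟨r, by omega⟩ 0 ≤ A 0 0 :=
            hA.2.2.1 0 ⟨r, by omega⟩ 0 (by simp [Fin.le_def])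
          have h3 : A (Fin.last (t''+1)) 0 ≤ A ⟨r, by omega⟩ 0 :=
            hA.2.2.1 ⟨r, by omega⟩ (Fin.last (t''+1)) 0 (by simp [Fin.le_def]; omega)
          omega
        have hcmp : (geom (A (Fin.last (t''+1)) (Fin.last (M''+1))) *
            hp (t''+2) (M''+1) (fun i j => A i j.castSucc)).natDegree
              < (X ^ (A (Fin.last (t''+1)) (Fin.last (M''+1))).toNat *
                hp (t''+1) (M''+1) (fun i j => A i.castSucc j.castSucc)).natDegree := by
          rw [hp2deg, hp1deg, hSNc, ← hSNc, hp1deg.symm.trans hp1deg, hSN]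
          omega
        obtain ⟨hne, hdeg, hlcq⟩ := add_facts_lt hp1ne hcmp
        refine ⟨hne, by rw [hdeg, hp1deg], ?_⟩
        rw [hlcq, hp1lc, hmin, show M''+1-(t''+1) = M''-t'' from by omega]
      · -- r = t+2 : all rows equal
        have hr : r = t''+2 := by omega
        have hmin : min r (t''+1) = t''+1 := by omega
        have heq0 : A (Fin.last (t''+1)) 0 = A 0 0 :=
          hreq (Fin.last (t''+1)) (by simp only [Fin.val_last]; omega)
        have haeqb : A (Fin.last (t''+1)) (Fin.last (M''+1))
            = A 0 (Fin.last (M''+1)) := by omega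
        have hdegeq : (X ^ (A (Fin.last (t''+1)) (Fin.last (M''+1))).toNat *
            hp (t''+1) (M''+1) (fun i j => A i.castSucc j.castSucc)).natDegree
              = (geom (A (Fin.last (t''+1)) (Fin.last (M''+1))) *
                hp (t''+2) (M''+1) (fun i j => A i j.castSucc)).natDegree := by
          rw [hp1deg, hp2deg, hSN]
          omega
        have hpos1 : (0:ℤ) < (X ^ (A (Fin.last (t''+1)) (Fin.last (M''+1))).toNat *
            hp (t''+1) (M''+1) (fun i j => A i.castSucc j.castSucc)).leadingCoeff := by
          rw [hp1lc]
          exact_mod_cast Nat.choose_pos (by omega)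
        have hpos2 : (0:ℤ) < (geom (A (Fin.last (t''+1)) (Fin.last (M''+1))) *
            hp (t''+2) (M''+1) (fun i j => A i j.castSucc)).leadingCoeff := by
          rw [hp2lc]
          exact_mod_cast Nat.choose_pos (by omega)
        obtain ⟨hne, hdeg, hlcq⟩ := add_facts_eq hp1ne hp2ne hdegeq hpos1 hpos2
        refine ⟨hne, by rw [hdeg, hp1deg], ?_⟩
        rw [hlcq, hp1lc, hp2lc, hmin, hr]
        obtain ⟨c'', hc⟩ : ∃ k, M'' - t'' = k + 1 := ⟨M'' - t'' - 1, by omega⟩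
        rw [hc, show M''-(t''+1) = c'' from by omega,
          show M''+1-(t''+1) = c''+1 from by omega,
          show t''+1-1+(c''+1) = t''+c''+1 from by omega,
          show t''+2-1+c'' = t''+c''+1 from by omega,
          show t''+2-1+(c''+1) = t''+c''+1+1 from by omega,
          Nat.choose_succ_succ (t''+c''+1) c'']
        push_cast
        ring

end Aux

/-- The leading coefficient of the h-polynomial of a degree matrix `A ∈ ℤ^{(t+1)×(t+c+1)}`
(codimension `c+1`) equals `binom(r + (c+1) - 2, (c+1) - 1) = binom(r-1+c, c)`, where
`r` is the number of maximal equal rows, i.e. the largest `r` with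
`a_{1,1} = a_{2,1} = ⋯ = a_{r,1}`. -/
theorem hp_leadingCoeff (t c r : ℕ) (A : Matrix (Fin (t + 1)) (Fin (t + c + 1)) ℤ)
    (hA : IsDegreeMatrix A) (hr1 : 1 ≤ r) (hrt : r ≤ t + 1)
    (hreq : ∀ i : Fin (t + 1), (i : ℕ) < r → A i 0 = A 0 0)
    (hrmax : ∀ h : r < t + 1, A ⟨r, h⟩ 0 ≠ A 0 0) :
    (hp (t + 1) (t + c + 1) A).leadingCoeff = ((r - 1 + c).choose c : ℤ) := by
  obtain ⟨-, -, hlc⟩ := master (t + c) t r A (by omega) hA hr1 hrt hreq hrmax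
  rw [hlc, show t + c - t = c from by omega]
end

section
/- Let A = (a_{i,j}) ∈ Z^{2×(c+1)} be a degree matrix with a_{2,1} = 0 (so the second row of A deleted along with column 1 gives the first row shifted). Then hp^A(z) = (1 + z + ... + z^{a_{1,1}+a_{2,c+1}-1}) · ∏_{i=2}^c (1 + z + ... + z^{a_{1,i}-1}), and a_{1,1} + a_{2,c+1} = a_{2,1} + a_{1,c+1} = a_{1,c+1}. -/
open Polynomial

lemma geom_add (a b : ℤ) (ha : 0 ≤ a) (hb : 0 ≤ b) :
    geom (a + b) = X ^ b.toNat * geom a + geom b := by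
  unfold geom
  have h : (a+b).toNat = b.toNat + a.toNat := by omega
  rw [h, Finset.sum_range_add, Finset.mul_sum, add_comm]
  congr 1
  exact Finset.sum_congr rfl fun i _ => pow_add X b.toNat i

lemma hp_one_row (m : ℕ) (B : Matrix (Fin 1) (Fin m) ℤ) :
    hp 1 m B = ∏ j, geom (B 0 j) := by
  induction m with
  | zero => rw [hp]; simp
  | succ m ih =>
      rw [hp]
      rw [if_neg (by omega)]
      have h0 : hp 0 m (fun i j => B i.castSucc j.castSucc) = 0 := by exact (hp.eq_def _ _ _).trans rfl
      rw [h0]; erw [ih]; rw [Fin.prod_univ_castSucc]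
      have : (Fin.last 0) = (0 : Fin 1) := rfl
      rw [this]
      ring

lemma hp_two_rows (m : ℕ) (A : Matrix (Fin 2) (Fin (m + 2)) ℤ)
    (hhom : ∀ j, A 1 j = A 0 j - A 0 0) (h00 : 0 ≤ A 0 0)
    (hmono : ∀ j, A 0 0 ≤ A 0 j) :
    hp 2 (m + 2) A =
      geom (A 0 0 + A 1 (Fin.last (m + 1))) *
        ∏ j : Fin m, geom (A 0 j.succ.castSucc) := by
  induction m with
  | zero =>
      rw [hp]
      rw [if_neg (by omega)]
      have h1 : hp 1 1 (fun (i : Fin 1) (j : Fin 1) => A i.castSucc j.castSucc)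
          = geom (A 0 0) := by
        refine (hp_one_row 1 _).trans ?_; simp
      have h2 : hp 2 1 (fun (i : Fin 2) (j : Fin 1) => A i j.castSucc) = 1 := by
        refine (hp.eq_def _ _ _).trans ?_; simp
      rw [h1, h2, Finset.univ_eq_empty, Finset.prod_empty, mul_one, mul_one]
      have hlast : (Fin.last 1 : Fin 2) = 1 := rfl
      rw [geom_add _ _ h00 (by rw [hhom]; have := hmono (Fin.last (0+1)); omega)]
      rw [hlast]
  | succ m ih =>
      rw [hp]
      rw [if_neg (by omega)]
      have hb : (0:ℤ) ≤ A 1 (Fin.last (m+2)) := by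
        rw [hhom]; have := hmono (Fin.last (m+2)); omega
      -- the single-row part
      have h1 : hp 1 (m + 2) (fun (i : Fin 1) (j : Fin (m+2)) => A i.castSucc j.castSucc)
          = ∏ j : Fin (m+2), geom (A 0 j.castSucc) := by
        refine (hp_one_row (m + 2) _).trans ?_
        exact Finset.prod_congr rfl fun j _ => by norm_num
      -- the smaller two-row part via IH
      set A' : Matrix (Fin 2) (Fin (m+2)) ℤ := fun i j => A i j.castSucc with hA'
      have h2 : hp 2 (m + 2) A' =
          geom (A' 0 0 + A' 1 (Fin.last (m + 1))) *
            ∏ j : Fin m, geom (A' 0 j.succ.castSucc) := by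
        apply ih
        · intro j; exact hhom j.castSucc
        · exact h00
        · intro j; exact hmono j.castSucc
      have hS : A' 0 0 + A' 1 (Fin.last (m+1)) = A 0 ((Fin.last (m+1)).castSucc) := by
        simp only [hA']
        rw [hhom]
        have : ((0 : Fin (m+2)).castSucc) = (0 : Fin (m+3)) := rfl
        rw [this]; ring
      rw [h1, h2, hS]
      -- decompose products
      rw [Fin.prod_univ_succ]
      have hsplit : ∏ j : Fin (m+1), geom (A 0 j.succ.castSucc)
          = (∏ j : Fin m, geom (A 0 j.succ.castSucc.castSucc)) *
              geom (A 0 ((Fin.last (m+1)).castSucc)) := by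
        rw [Fin.prod_univ_castSucc, Fin.succ_last]
        congr 1
      rw [hsplit]
      have hA'prod : ∏ j : Fin m, geom (A' 0 j.succ.castSucc)
          = ∏ j : Fin m, geom (A 0 j.succ.castSucc.castSucc) := by
        exact Finset.prod_congr rfl fun j _ => rfl
      rw [hA'prod]
      have hzero : (fun (j : Fin (m+2)) => geom (A 0 j.castSucc)) 0 = geom (A 0 0) := by
        norm_num
      have hlast2 : (Fin.last 1 : Fin 2) = 1 := rfl
      rw [geom_add _ _ h00 hb, hlast2]
      ring_nf
      rw [show ((0 : Fin (m+2)).castSucc) = (0 : Fin (m+3)) from rfl]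
      ring

lemma prod_interior (n : ℕ) (f : Fin (n + 2) → Polynomial ℤ) :
    ∏ j ∈ Finset.Ioo (0 : Fin (n + 2)) (Fin.last (n + 1)), f j
      = ∏ j : Fin n, f j.succ.castSucc := by
  symm
  apply Finset.prod_bij (fun (a : Fin n) _ => a.succ.castSucc)
  · intro a _
    rw [Finset.mem_Ioo]
    constructor
    · rw [Fin.lt_iff_val_lt_val]
      simp
    · rw [Fin.lt_iff_val_lt_val]
      simp only [Fin.coe_castSucc, Fin.val_succ, Fin.val_last]
      omega
  · intro a _ b _ h
    have : (a : ℕ) + 1 = (b : ℕ) + 1 := by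
      have := congrArg Fin.val h
      simpa using this
    exact Fin.ext (by omega)
  · intro b hb
    rw [Finset.mem_Ioo, Fin.lt_iff_val_lt_val, Fin.lt_iff_val_lt_val] at hb
    simp only [Fin.val_zero, Fin.val_last] at hb
    refine ⟨⟨(b : ℕ) - 1, by omega⟩, Finset.mem_univ _, ?_⟩
    apply Fin.ext
    simp only [Fin.coe_castSucc, Fin.val_succ]
    omega
  · intro a _
    rfl

/-- For a degree matrix `A ∈ ℤ^{2×(c+2)}` (so of codimension `c+1`) with `a_{2,1} = 0`:
`hp^A(z) = (1 + z + ⋯ + z^{a_{1,1}+a_{2,c+2}-1}) · ∏_{j=2}^{c+1} (1 + z + ⋯ + z^{a_{1,j}-1})`,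
and `a_{1,1} + a_{2,c+2} = a_{2,1} + a_{1,c+2} = a_{1,c+2}`. -/
theorem hp_two_rows_a21_zero (c : ℕ) (A : Matrix (Fin 2) (Fin (c + 2)) ℤ)
    (hA : IsDegreeMatrix A) (h21 : A 1 0 = 0) :
    hp 2 (c + 2) A =
        geom (A 0 0 + A 1 (Fin.last (c + 1))) *
          ∏ j ∈ Finset.Ioo (0 : Fin (c + 2)) (Fin.last (c + 1)), geom (A 0 j) ∧
      A 0 0 + A 1 (Fin.last (c + 1)) = A 0 (Fin.last (c + 1)) := by
  obtain ⟨⟨α, β, hab⟩, hrow, hcol, hdiag⟩ := hA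
  have hhom : ∀ j, A 1 j = A 0 j - A 0 0 := by
    intro j
    have h0 : β 0 = α 1 := by have := hab 1 0; rw [h21] at this; omega
    rw [hab 1 j, hab 0 j, hab 0 0, h0]
    ring
  have h00 : 0 ≤ A 0 0 := le_of_lt (by simpa using hdiag 0 (by norm_num))
  have hmono : ∀ j, A 0 0 ≤ A 0 j := fun j => hrow 0 0 j (Fin.zero_le j)
  constructor
  · rw [hp_two_rows c A hhom h00 hmono, prod_interior]
  · rw [hhom]; ring
end
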